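/- arXiv:2003.10357 — 2 statements merged into one kernel-verified Lean document; each statement's English description precedes it below -/
import Mathlib

section
/- Let K be an algebraically closed field, let N ≤ r, let A be an r×N integer matrix with rows u_1,…,u_r ∈ ℤ^N, and let G = {t ∈ (Kˣ)^r : t^A = 1_N}. Let σ : {1,…,N} → {1,…,r} be injective and let A_σ be the N×N matrix whose i-th row is u_{σ(i)}; assume det(A_σ) is nonzero and coprime to the characteristic of K. Then for every family (x_i)_{i ∉ Im(σ)} of units of K there exists t ∈ G such that t_i = x_i⁻¹ for every index i ∈ {1,…,r} outside the image of σ. (Paper: Lemma 3.4 'RepOrbit', in matrix form.) -/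
private lemma zpow_sum_aux {G : Type*} [CommGroup G] {ι : Type*} (a : G)
    (s : Finset ι) (f : ι → ℤ) : a ^ (∑ i ∈ s, f i) = ∏ i ∈ s, a ^ f i := by
  induction s using Finset.cons_induction with
  | empty => simp
  | cons i s hi ih => rw [Finset.sum_cons, Finset.prod_cons, zpow_add, ih]

private lemma exists_zpow_eq {K : Type*} [Field K] [IsAlgClosed K]
    (d : ℤ) (hd : d ≠ 0) (a : Kˣ) : ∃ w : Kˣ, w ^ d = a := by
  have key : ∀ (b : Kˣ) (n : ℕ), 0 < n → ∃ w : Kˣ, w ^ (n : ℤ) = b := by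
    intro b n hn
    obtain ⟨z, hz⟩ := IsAlgClosed.exists_pow_nat_eq (b : K) hn
    have hz0 : z ≠ 0 := by
      rintro rfl
      exact b.ne_zero (by rw [← hz, zero_pow hn.ne'])
    refine ⟨Units.mk0 z hz0, ?_⟩
    ext
    push_cast
    simpa using hz
  rcases lt_or_gt_of_ne hd with h | h
  · obtain ⟨n, hn⟩ : ∃ n : ℕ, -d = n := ⟨(-d).toNat, (Int.toNat_of_nonneg (by omega)).symm⟩
    obtain ⟨w, hw⟩ := key a n (by omega)
    exact ⟨w⁻¹, by rw [inv_zpow, ← zpow_neg, hn, hw]⟩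
  · obtain ⟨n, hn⟩ : ∃ n : ℕ, d = n := ⟨d.toNat, (Int.toNat_of_nonneg (by omega)).symm⟩
    obtain ⟨w, hw⟩ := key a n (by omega)
    exact ⟨w, by rw [hn, hw]⟩

private lemma solve_square {K : Type*} [Field K] [IsAlgClosed K] {N : ℕ}
    (B : Matrix (Fin N) (Fin N) ℤ) (hdet : B.det ≠ 0) (c : Fin N → Kˣ) :
    ∃ s : Fin N → Kˣ, ∀ j, ∏ i, s i ^ B i j = c j := by
  choose w hw using fun j => exists_zpow_eq B.det hdet (c j)
  set C := B.adjugate with hC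
  refine ⟨fun i => ∏ k, w k ^ C k i, fun j => ?_⟩
  calc ∏ i, (∏ k, w k ^ C k i) ^ B i j
      = ∏ i, ∏ k, w k ^ (C k i * B i j) := by
        simp_rw [← Finset.prod_zpow, ← zpow_mul]
    _ = ∏ k, ∏ i, w k ^ (C k i * B i j) := Finset.prod_comm
    _ = ∏ k, w k ^ ((C * B) k j) := by
        refine Finset.prod_congr rfl fun k _ => ?_
        rw [Matrix.mul_apply, zpow_sum_aux]
    _ = c j := by
        rw [hC, Matrix.adjugate_mul]
        rw [Fintype.prod_eq_single j]
        · rw [Matrix.smul_apply, Matrix.one_apply_eq, smul_eq_mul, mul_one]; exact hw j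
        · intro k hk
          simp [Matrix.one_apply, hk]

/-- Lemma 3.4 'RepOrbit', matrix form: with
`G = {t ∈ (Kˣ)^r : t^A = 1_N}` and `σ : Fin N → Fin r` injective such that the
square submatrix `A_σ` of rows `u_{σ(i)}` has determinant nonzero and coprime
to the characteristic, for every family `x` of units there exists `t ∈ G` with
`t i = (x i)⁻¹` for every `i` outside the image of `σ`. -/
theorem stmt_2 {K : Type*} [Field K] [IsAlgClosed K] {N r : ℕ} (hNr : N ≤ r)
    (A : Matrix (Fin r) (Fin N) ℤ)
    (σ : Fin N → Fin r) (hσ : Function.Injective σ)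
    (hdet : (Matrix.of fun i j : Fin N => A (σ i) j).det ≠ 0)
    (hchar : ∀ p : ℕ, 0 < p → CharP K p →
      ¬ ((p : ℤ) ∣ (Matrix.of fun i j : Fin N => A (σ i) j).det))
    (x : Fin r → Kˣ) :
    ∃ t : Fin r → Kˣ,
      (∀ j : Fin N, ∏ i : Fin r, t i ^ A i j = 1) ∧
      (∀ i : Fin r, i ∉ Set.range σ → t i = (x i)⁻¹) := by
  classical
  set B : Matrix (Fin N) (Fin N) ℤ := Matrix.of fun i j : Fin N => A (σ i) j with hB
  set S : Finset (Fin r) := Finset.univ.image σ with hS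
  set c : Fin N → Kˣ := fun j => (∏ i ∈ Sᶜ, (x i)⁻¹ ^ A i j)⁻¹ with hc
  obtain ⟨s, hs⟩ := solve_square B hdet c
  set t : Fin r → Kˣ := Function.extend σ s (fun i => (x i)⁻¹) with ht
  have htσ : ∀ k, t (σ k) = s k := fun k => hσ.extend_apply _ _ _
  have htx : ∀ i, i ∉ Set.range σ → t i = (x i)⁻¹ := by
    intro i hi
    exact Function.extend_apply' _ _ _ (by simpa [Set.range] using hi)
  refine ⟨t, fun j => ?_, htx⟩
  have hsplit : ∏ i : Fin r, t i ^ A i j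
      = (∏ i ∈ S, t i ^ A i j) * ∏ i ∈ Sᶜ, t i ^ A i j :=
    (Finset.prod_mul_prod_compl S _).symm
  have h1 : ∏ i ∈ S, t i ^ A i j = c j := by
    rw [hS, Finset.prod_image (fun a _ b _ h => hσ h)]
    have : ∀ k : Fin N, t (σ k) ^ A (σ k) j = s k ^ B k j := by
      intro k; rw [htσ]; rfl
    rw [Finset.prod_congr rfl fun k _ => this k]
    exact hs j
  have h2 : ∏ i ∈ Sᶜ, t i ^ A i j = (c j)⁻¹ := by
    rw [hc, inv_inv]
    refine Finset.prod_congr rfl fun i hi => ?_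
    rw [htx i (by simpa [hS, Set.range, eq_comm] using Finset.mem_compl.mp hi)]
  rw [hsplit, h1, h2, mul_inv_cancel]
end

section
/- Let K be an algebraically closed field and k ≤ N positive integers. Let H be an N×N lower triangular integer matrix whose diagonal entries are all nonzero and coprime to the characteristic of K, and let L2 be its k×k bottom-right block (rows and columns N−k+1,…,N). Then for every y ∈ (Kˣ)^k the following are equivalent: (i) y^{L2} = 1_k; (ii) there exists s ∈ (Kˣ)^{N−k} such that the concatenated tuple (s_1,…,s_{N−k},y_1,…,y_k) ∈ (Kˣ)^N satisfies (s,y)^H = 1_N. (Paper: the key equivalence between equations (eq:PowerH) and (eq:PowerL) established in the proof of Lemma 3.8.) -/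
lemma exists_pow_units {K : Type*} [Field K] [IsAlgClosed K] (a : Kˣ) (n : ℕ) (hn : 0 < n) :
    ∃ x : Kˣ, x ^ n = a := by
  obtain ⟨x, hx⟩ := IsAlgClosed.exists_pow_nat_eq (a : K) hn
  have hx0 : x ≠ 0 := by
    rintro rfl
    rw [zero_pow hn.ne'] at hx
    exact a.ne_zero hx.symm
  exact ⟨Units.mk0 x hx0, Units.ext (by simp [hx])⟩

lemma exists_zpow_units {K : Type*} [Field K] [IsAlgClosed K] (a : Kˣ) (d : ℤ) (hd : d ≠ 0) :
    ∃ x : Kˣ, x ^ d = a := by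
  rcases hd.lt_or_gt with h | h
  · obtain ⟨x, hx⟩ := exists_pow_units a⁻¹ d.natAbs (by omega)
    refine ⟨x, ?_⟩
    have hh : d = -(d.natAbs : ℤ) := by omega
    rw [hh, zpow_neg, zpow_natCast, hx, inv_inv]
  · obtain ⟨x, hx⟩ := exists_pow_units a d.natAbs (by omega)
    refine ⟨x, ?_⟩
    have hh : d = (d.natAbs : ℤ) := by omega
    rw [hh, zpow_natCast, hx]

lemma solve_triangular {K : Type*} [Field K] [IsAlgClosed K] :
    ∀ (m : ℕ) (d : Fin m → ℤ), (∀ j, d j ≠ 0) →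
      ∀ F : (Fin m → Kˣ) → Fin m → Kˣ,
        (∀ (j : Fin m) (s s' : Fin m → Kˣ), (∀ i, j < i → s i = s' i) → F s j = F s' j) →
        ∃ s, ∀ j, s j ^ d j = F s j := by
  intro m
  induction m with
  | zero => exact fun d _ F _ => ⟨fun i => i.elim0, fun j => j.elim0⟩
  | succ n ih =>
    intro d hd F hF
    obtain ⟨s', hs'⟩ := ih (fun j => d j.succ) (fun j => hd j.succ)
      (fun t j => F (Fin.cons 1 t) j.succ)
      (by
        intro j t t' hag
        refine hF j.succ _ _ ?_
        intro i hi
        induction i using Fin.cases with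
        | zero => exact absurd hi (by simp [Fin.lt_def])
        | succ i' =>
          simp only [Fin.cons_succ]
          exact hag i' (Fin.succ_lt_succ_iff.mp hi))
    obtain ⟨x, hx⟩ := exists_zpow_units (F (Fin.cons 1 s') 0) (d 0) (hd 0)
    refine ⟨Fin.cons x s', ?_⟩
    intro j
    induction j using Fin.cases with
    | zero =>
      rw [Fin.cons_zero, hx]
      refine hF 0 _ _ ?_
      intro i hi
      induction i using Fin.cases with
      | zero => exact absurd hi (lt_irrefl _)
      | succ i' => simp [Fin.cons_succ]
    | succ j' =>
      rw [Fin.cons_succ, hs' j']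
      refine hF j'.succ _ _ ?_
      intro i hi
      induction i using Fin.cases with
      | zero => exact absurd hi (by simp [Fin.lt_def])
      | succ i' => simp [Fin.cons_succ]

lemma prod_tail {M : Type*} [CommMonoid M] {N m k : ℕ} (hN : N = m + k)
    (f : Fin N → M) (g : Fin k → M)
    (hf : ∀ i : Fin N, (i : ℕ) < m → f i = 1)
    (hg : ∀ i : Fin N, ∀ h : m ≤ (i : ℕ), f i = g ⟨(i : ℕ) - m, by omega⟩) :
    ∏ i, f i = ∏ i, g i := by
  subst hN
  rw [Fin.prod_univ_add]
  rw [Finset.prod_eq_one fun i _ => hf (Fin.castAdd k i) (by simpa using i.isLt), one_mul]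
  refine Finset.prod_congr rfl fun i _ => ?_
  rw [hg (Fin.natAdd m i) (by simpa using Nat.le_add_right m i)]
  congr 1
  exact Fin.ext (by simp)

/-- equivalence (eq:PowerH) ⇔ (eq:PowerL) from the proof of
Lemma 3.8: for `H` an `N×N` lower triangular integer matrix with diagonal
entries nonzero and coprime to the characteristic of the algebraically closed
field `K`, and `L2` its `k×k` bottom-right block, `y^{L2} = 1_k` holds iff some
`s ∈ (Kˣ)^{N-k}` makes the concatenation `(s,y)` satisfy `(s,y)^H = 1_N`. -/
theorem stmt_3 {K : Type*} [Field K] [IsAlgClosed K] {N k : ℕ}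
    (hk : 0 < k) (hkN : k ≤ N)
    (H : Matrix (Fin N) (Fin N) ℤ)
    (hlow : ∀ i j : Fin N, (i : ℕ) < (j : ℕ) → H i j = 0)
    (hdiag : ∀ i : Fin N, H i i ≠ 0)
    (hchar : ∀ i : Fin N, ∀ p : ℕ, 0 < p → CharP K p → ¬ ((p : ℤ) ∣ H i i))
    (y : Fin k → Kˣ) :
    (∀ j : Fin k, ∏ i : Fin k,
        y i ^ H ⟨N - k + (i : ℕ), by have := i.isLt; omega⟩
               ⟨N - k + (j : ℕ), by have := j.isLt; omega⟩ = 1)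
      ↔ ∃ s : Fin (N - k) → Kˣ,
          ∀ j : Fin N, ∏ i : Fin N,
            (if h : (i : ℕ) < N - k then s ⟨(i : ℕ), h⟩
             else y ⟨(i : ℕ) - (N - k), by have := i.isLt; omega⟩) ^ H i j = 1 := by
  have hN : N = (N - k) + k := by omega
  set m := N - k with hmdef
  have hmN : m ≤ N := by omega
  let e : Fin m → Fin N := fun j => ⟨(j : ℕ), lt_of_lt_of_le j.isLt hmN⟩
  let T : (Fin m → Kˣ) → Fin N → Kˣ := fun s i =>
    if h : (i : ℕ) < m then s ⟨(i : ℕ), h⟩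
    else y ⟨(i : ℕ) - m, by have := i.isLt; omega⟩
  have hT_congr : ∀ (j : Fin m) (s s' : Fin m → Kˣ), (∀ i, j < i → s i = s' i) →
      ∀ i : Fin N, (j : ℕ) < (i : ℕ) → T s i = T s' i := by
    intro j s s' hag i hi
    simp only [T]
    split
    · next h => exact hag ⟨(i : ℕ), h⟩ hi
    · rfl
  have hTy : ∀ (s : Fin m → Kˣ) (i : Fin N) (h : m ≤ (i : ℕ)),
      T s i = y ⟨(i : ℕ) - m, by have := i.isLt; omega⟩ := by
    intro s i h
    simp only [T]
    rw [dif_neg (by omega)]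
  constructor
  · intro hL
    obtain ⟨s, hs⟩ := solve_triangular m (fun j => H (e j) (e j)) (fun j => hdiag _)
      (fun t j => (∏ i ∈ Finset.univ.erase (e j), T t i ^ H i (e j))⁻¹)
      (by
        intro j s s' hag
        show (∏ i ∈ Finset.univ.erase (e j), T s i ^ H i (e j))⁻¹
          = (∏ i ∈ Finset.univ.erase (e j), T s' i ^ H i (e j))⁻¹
        congr 1
        refine Finset.prod_congr rfl fun i hi => ?_
        have hne : i ≠ e j := (Finset.mem_erase.mp hi).1
        rcases lt_trichotomy (i : ℕ) (j : ℕ) with h | h | h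
        · rw [hlow i (e j) h, zpow_zero, zpow_zero]
        · exact absurd (Fin.ext h : i = e j) hne
        · rw [hT_congr j s s' hag i h])
    refine ⟨s, ?_⟩
    intro j
    show ∏ i : Fin N, T s i ^ H i j = 1
    by_cases hj : (j : ℕ) < m
    · have h2 := Finset.mul_prod_erase Finset.univ (fun i => T s i ^ H i j)
        (Finset.mem_univ j)
      rw [← h2]
      show T s j ^ H j j * (∏ i ∈ Finset.univ.erase j, T s i ^ H i j) = 1
      have hTv : T s j = s ⟨(j : ℕ), hj⟩ := by
        simp only [T]
        rw [dif_pos hj]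
      have key : s ⟨(j : ℕ), hj⟩ ^ H j j
          = (∏ i ∈ Finset.univ.erase j, T s i ^ H i j)⁻¹ := hs ⟨(j : ℕ), hj⟩
      rw [hTv, key]
      exact inv_mul_cancel _
    · push_neg at hj
      have hjk : (j : ℕ) - m < k := by have := j.isLt; omega
      have hj2 : m + ((j : ℕ) - m) < N := by have := j.isLt; omega
      have hcol : j = (⟨m + ((j : ℕ) - m), hj2⟩ : Fin N) :=
        Fin.ext (show (j : ℕ) = m + ((j : ℕ) - m) by omega)
      rw [hcol]
      have hf : ∀ i : Fin N, (i : ℕ) < m →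
          T s i ^ H i (⟨m + ((j : ℕ) - m), hj2⟩ : Fin N) = 1 := by
        intro i hi
        rw [hlow i _ (show (i : ℕ) < m + ((j : ℕ) - m) by omega), zpow_zero]
      have hg : ∀ i : Fin N, ∀ h : m ≤ (i : ℕ),
          T s i ^ H i (⟨m + ((j : ℕ) - m), hj2⟩ : Fin N)
            = y ⟨(i : ℕ) - m, by have := i.isLt; omega⟩
              ^ H ⟨m + ((i : ℕ) - m), by have := i.isLt; omega⟩
                  (⟨m + ((j : ℕ) - m), hj2⟩ : Fin N) := by
        intro i h
        have h2 : i = (⟨m + ((i : ℕ) - m), by have := i.isLt; omega⟩ : Fin N) :=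
          Fin.ext (show (i : ℕ) = m + ((i : ℕ) - m) by omega)
        rw [hTy s i h]
        exact congrArg (fun d => y ⟨(i : ℕ) - m, by have := i.isLt; omega⟩ ^ d)
          (congrArg (fun a => H a (⟨m + ((j : ℕ) - m), hj2⟩ : Fin N)) h2)
      exact (prod_tail hN (fun i => T s i ^ H i (⟨m + ((j : ℕ) - m), hj2⟩ : Fin N))
        (fun i => y i ^ H ⟨m + (i : ℕ), by have := i.isLt; omega⟩
          (⟨m + ((j : ℕ) - m), hj2⟩ : Fin N)) hf hg).trans (hL ⟨(j : ℕ) - m, hjk⟩)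
  · rintro ⟨s, hs⟩ j
    have hjN : m + (j : ℕ) < N := by have := j.isLt; omega
    have key : ∏ i : Fin N, T s i ^ H i (⟨m + (j : ℕ), hjN⟩ : Fin N) = 1 :=
      hs ⟨m + (j : ℕ), hjN⟩
    have hf : ∀ i : Fin N, (i : ℕ) < m →
        T s i ^ H i (⟨m + (j : ℕ), hjN⟩ : Fin N) = 1 := by
      intro i hi
      rw [hlow i _ (show (i : ℕ) < m + (j : ℕ) by omega), zpow_zero]
    have hg : ∀ i : Fin N, ∀ h : m ≤ (i : ℕ),
        T s i ^ H i (⟨m + (j : ℕ), hjN⟩ : Fin N)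
          = y ⟨(i : ℕ) - m, by have := i.isLt; omega⟩
            ^ H ⟨m + ((i : ℕ) - m), by have := i.isLt; omega⟩
                (⟨m + (j : ℕ), hjN⟩ : Fin N) := by
      intro i h
      have h2 : i = (⟨m + ((i : ℕ) - m), by have := i.isLt; omega⟩ : Fin N) :=
        Fin.ext (show (i : ℕ) = m + ((i : ℕ) - m) by omega)
      rw [hTy s i h]
      exact congrArg (fun d => y ⟨(i : ℕ) - m, by have := i.isLt; omega⟩ ^ d)
        (congrArg (fun a => H a (⟨m + (j : ℕ), hjN⟩ : Fin N)) h2)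
    exact ((prod_tail hN (fun i => T s i ^ H i (⟨m + (j : ℕ), hjN⟩ : Fin N))
      (fun i => y i ^ H ⟨m + (i : ℕ), by have := i.isLt; omega⟩
        (⟨m + (j : ℕ), hjN⟩ : Fin N)) hf hg).symm.trans key : _)
end
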